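/- Under the equal power allocation $p_{c,k} = P_{\max}/K$ and effective gains $g_k = P_{\max}\rho_k^2 M_t M_r N^2/K^3 > 0$, the achievable rate $R(N) = \sum_{k=1}^K \log_2(1 + g_k)$ satisfies $R(N) - (\log_2 \prod_{k=1}^K (P_{\max}\rho_k^2 M_t M_r) + K\log_2(N^2/K^3)) \to 0$ as $N \to \infty$; in particular $R(N) = \Theta(\log N)$ with $\lim_{N\to\infty} R(N)/\log_2 N = 2K$. -/

import Mathlib

open Finset Filter

/-- Large-`N` scaling law of the rate: `R(N)` equals
`log₂ ∏ₖ (P ρₖ² M_t M_r) + K log₂(N²/K³)` up to a vanishing term, and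
`R(N)/log₂ N → 2K`. -/
theorem rate_scaling_law (K : ℕ) (hK : 0 < K)
    (Mt Mr : ℕ) (hMt : 1 ≤ Mt) (hMr : 1 ≤ Mr)
    (Pmax : ℝ) (hP : 0 < Pmax)
    (ρsq : Fin K → ℝ) (hρ : ∀ k, 0 < ρsq k) :
    let R : ℝ → ℝ := fun N =>
      ∑ k, Real.logb 2 (1 + Pmax * ρsq k * Mt * Mr * N ^ 2 / K ^ 3)
    Tendsto (fun N : ℝ => R N -
        (Real.logb 2 (∏ k, Pmax * ρsq k * Mt * Mr)
          + K * Real.logb 2 (N ^ 2 / K ^ 3))) atTop (nhds 0) ∧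
    Tendsto (fun N : ℝ => R N / Real.logb 2 N) atTop (nhds (2 * K)) := by
  intro R
  have hK' : (0:ℝ) < (K:ℝ) := by exact_mod_cast hK
  have hMt' : (0:ℝ) < (Mt:ℝ) := by exact_mod_cast Nat.lt_of_lt_of_le Nat.zero_lt_one hMt
  have hMr' : (0:ℝ) < (Mr:ℝ) := by exact_mod_cast Nat.lt_of_lt_of_le Nat.zero_lt_one hMr
  have hc : ∀ k, 0 < Pmax * ρsq k * Mt * Mr := by
    intro k; have := hρ k; positivity
  -- the vanishing-difference function
  have heq : (fun N : ℝ => R N -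
        (Real.logb 2 (∏ k, Pmax * ρsq k * Mt * Mr)
          + K * Real.logb 2 (N ^ 2 / K ^ 3))) =ᶠ[atTop]
      (fun N : ℝ => ∑ k, Real.logb 2 (1 + (K:ℝ)^3 / (Pmax * ρsq k * Mt * Mr * N ^ 2))) := by
    filter_upwards [eventually_gt_atTop (0:ℝ)] with N hN
    have hN2 : (0:ℝ) < N ^ 2 := by positivity
    rw [Real.logb_prod _ _ (fun k _ => (hc k).ne')]
    have hconst : (K:ℝ) * Real.logb 2 (N ^ 2 / (K:ℝ) ^ 3)
        = ∑ _k : Fin K, Real.logb 2 (N ^ 2 / (K:ℝ) ^ 3) := by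
      simp [Finset.sum_const, Finset.card_univ, mul_comm]
    rw [hconst, ← Finset.sum_add_distrib]
    show (∑ k, Real.logb 2 (1 + Pmax * ρsq k * Mt * Mr * N ^ 2 / K ^ 3)) - _ = _
    rw [← Finset.sum_sub_distrib]
    refine Finset.sum_congr rfl fun k _ => ?_
    have hck := hc k
    have hg : (0:ℝ) < Pmax * ρsq k * Mt * Mr * N ^ 2 / (K:ℝ) ^ 3 := by positivity
    have h1 : Real.logb 2 (Pmax * ρsq k * ↑Mt * ↑Mr) + Real.logb 2 (N ^ 2 / (K:ℝ) ^ 3)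
        = Real.logb 2 (Pmax * ρsq k * Mt * Mr * N ^ 2 / (K:ℝ) ^ 3) := by
      rw [← Real.logb_mul hck.ne' (by positivity)]
      ring_nf
    rw [h1, ← Real.logb_div (by positivity) hg.ne']
    congr 1
    field_simp [(hρ k).ne', hP.ne', hN.ne', hK'.ne', hMt'.ne', hMr'.ne']
    ring
  have hD : Tendsto
      (fun N : ℝ => ∑ k, Real.logb 2 (1 + (K:ℝ)^3 / (Pmax * ρsq k * Mt * Mr * N ^ 2)))
      atTop (nhds 0) := by
    have h0 : (0:ℝ) = ∑ _k : Fin K, (0:ℝ) := by simp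
    rw [h0]
    refine tendsto_finset_sum _ fun k _ => ?_
    have hck := hc k
    have h1 : Tendsto (fun N : ℝ => 1 + (K:ℝ)^3 / (Pmax * ρsq k * Mt * Mr * N ^ 2))
        atTop (nhds 1) := by
      have h2 : Tendsto (fun N : ℝ => (K:ℝ)^3 / (Pmax * ρsq k * Mt * Mr * N ^ 2))
          atTop (nhds 0) := by
        refine Tendsto.div_atTop tendsto_const_nhds ?_
        exact Tendsto.const_mul_atTop hck (tendsto_pow_atTop two_ne_zero)
      simpa using tendsto_const_nhds.add h2
    have h3 := ((Real.continuousAt_log one_ne_zero).tendsto.comp h1)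
    simp only [Real.log_one] at h3
    have h4 := h3.div_const (Real.log 2)
    simpa [Real.logb, Function.comp] using h4
  have part1 := hD.congr' heq.symm
  refine ⟨part1, ?_⟩
  -- second part
  have hlog : Tendsto (fun N : ℝ => Real.logb 2 N) atTop atTop :=
    Real.tendsto_logb_atTop one_lt_two
  set C : ℝ := Real.logb 2 (∏ k, Pmax * ρsq k * Mt * Mr) with hC
  have h2 : Tendsto (fun N : ℝ =>
      ((R N - (C + K * Real.logb 2 (N ^ 2 / K ^ 3))) + (C - K * Real.logb 2 ((K:ℝ)^3)))
        / Real.logb 2 N) atTop (nhds 0) := by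
    have hnum := part1.add (tendsto_const_nhds (x := C - K * Real.logb 2 ((K:ℝ)^3)))
    rw [zero_add] at hnum
    have := Tendsto.div_atTop hnum hlog
    simpa using this
  have h3 := h2.add (tendsto_const_nhds (x := (2 * K : ℝ)))
  rw [zero_add] at h3
  refine h3.congr' ?_
  filter_upwards [eventually_gt_atTop (1:ℝ)] with N hN1
  have hNpos : (0:ℝ) < N := lt_trans one_pos hN1
  have hlogpos : 0 < Real.logb 2 N := Real.logb_pos one_lt_two hN1
  have hsplit : Real.logb 2 (N ^ 2 / (K:ℝ) ^ 3)
      = 2 * Real.logb 2 N - Real.logb 2 ((K:ℝ)^3) := by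
    rw [Real.logb_div (by positivity) (by positivity), Real.logb_pow]
    norm_num
  rw [hsplit]
  field_simp
  ring
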